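/- Define Λ(b,y) := −e₄(b,y)/e₃(b,y) and L(y) := (1/(γ₁(r) − γ₂(r)))·log( (γ₂(r)²/γ₁(r)²)·Λ(y,y) ) − y. Then: (i) for each y ∈ [y_l, y_u], the map b ↦ Λ(b,y) is strictly decreasing on (b*_{r+q}, y); (ii) for each y ∈ [y_l, y_u], the map b ↦ e₃(b,y) is strictly decreasing on (b*_{r+q}, y); (iii) L is strictly decreasing on (y_l, y_u); (iv) L(y_u) = 0. -/

import Mathlib

open Real Set Filter

noncomputable def gam1 (μ σ ρ : ℝ) : ℝ := Real.sqrt (μ^2/σ^4 + 2*ρ/σ^2) - μ/σ^2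

noncomputable def gam2 (μ σ ρ : ℝ) : ℝ := -Real.sqrt (μ^2/σ^4 + 2*ρ/σ^2) - μ/σ^2

/-- The classical optimal dividend boundary `b*_ρ`. -/
noncomputable def bstar (μ σ ρ : ℝ) : ℝ :=
  Real.log ((gam2 μ σ ρ)^2 / (gam1 μ σ ρ)^2) / (gam1 μ σ ρ - gam2 μ σ ρ)

/-- The classical value function `V_ρ`. -/
noncomputable def Vfun (μ σ ρ x : ℝ) : ℝ :=
  if x < bstar μ σ ρ then
    (Real.exp (gam1 μ σ ρ * x) - Real.exp (gam2 μ σ ρ * x)) /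
      (gam1 μ σ ρ * Real.exp (gam1 μ σ ρ * bstar μ σ ρ) -
        gam2 μ σ ρ * Real.exp (gam2 μ σ ρ * bstar μ σ ρ))
  else
    (Real.exp (gam1 μ σ ρ * bstar μ σ ρ) - Real.exp (gam2 μ σ ρ * bstar μ σ ρ)) /
      (gam1 μ σ ρ * Real.exp (gam1 μ σ ρ * bstar μ σ ρ) -
        gam2 μ σ ρ * Real.exp (gam2 μ σ ρ * bstar μ σ ρ)) + x - bstar μ σ ρ

/-- `δ(y) = e^{γ₁(r+q)y} − e^{γ₂(r+q)y}`. -/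
noncomputable def del (μ σ r q y : ℝ) : ℝ :=
  Real.exp (gam1 μ σ (r+q) * y) - Real.exp (gam2 μ σ (r+q) * y)

/-- `δ'(y)`. -/
noncomputable def delP (μ σ r q y : ℝ) : ℝ :=
  gam1 μ σ (r+q) * Real.exp (gam1 μ σ (r+q) * y) -
    gam2 μ σ (r+q) * Real.exp (gam2 μ σ (r+q) * y)

/-- `δ''(y)`. -/
noncomputable def delPP (μ σ r q y : ℝ) : ℝ :=
  (gam1 μ σ (r+q))^2 * Real.exp (gam1 μ σ (r+q) * y) -
    (gam2 μ σ (r+q))^2 * Real.exp (gam2 μ σ (r+q) * y)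

/-- `y_u := b*_{r+q} + μ/r − μ/(r+q)`. -/
noncomputable def yUpper (μ σ r q : ℝ) : ℝ := bstar μ σ (r+q) + μ/r - μ/(r+q)

/-- `Δ(y)`. -/
noncomputable def DeltaF (μ σ r q y : ℝ) : ℝ :=
  (1/(gam1 μ σ r - gam2 μ σ r)) *
    Real.log ((gam2 μ σ r)^2 * (delP μ σ r q y - gam1 μ σ r * del μ σ r q y) /
      ((gam1 μ σ r)^2 * (delP μ σ r q y - gam2 μ σ r * del μ σ r q y)))

/-- `b*(y) = y + Δ(y)`. -/
noncomputable def bstarY (μ σ r q y : ℝ) : ℝ := y + DeltaF μ σ r q y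

noncomputable def psiF (μ σ ρ x : ℝ) : ℝ := Real.exp (gam1 μ σ ρ * x)
noncomputable def phiF (μ σ ρ x : ℝ) : ℝ := Real.exp (gam2 μ σ ρ * x)
noncomputable def psiP (μ σ ρ x : ℝ) : ℝ := gam1 μ σ ρ * Real.exp (gam1 μ σ ρ * x)
noncomputable def phiP (μ σ ρ x : ℝ) : ℝ := gam2 μ σ ρ * Real.exp (gam2 μ σ ρ * x)

/-- `η(y;b) = ψ'_r(b)φ_r(y) − φ'_r(b)ψ_r(y)`. -/
noncomputable def etaF (μ σ r y b : ℝ) : ℝ :=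
  psiP μ σ r b * phiF μ σ r y - phiP μ σ r b * psiF μ σ r y

/-- `η'(y;b)` (derivative in `y`). -/
noncomputable def etaP (μ σ r y b : ℝ) : ℝ :=
  psiP μ σ r b * phiP μ σ r y - phiP μ σ r b * psiP μ σ r y

/-- `K₁(y)`. -/
noncomputable def K1 (μ σ r q y : ℝ) : ℝ :=
  (psiF μ σ r y * etaP μ σ r y (bstarY μ σ r q y) -
    psiP μ σ r y * etaF μ σ r y (bstarY μ σ r q y)) /
  (psiP μ σ r (bstarY μ σ r q y) *
    (del μ σ r q y * etaP μ σ r y (bstarY μ σ r q y) -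
      delP μ σ r q y * etaF μ σ r y (bstarY μ σ r q y)))

/-- `K₂(y) = −K₁(y)`. -/
noncomputable def K2 (μ σ r q y : ℝ) : ℝ := -K1 μ σ r q y

/-- `K₃(y)`. -/
noncomputable def K3 (μ σ r q y : ℝ) : ℝ :=
  (phiP μ σ r (bstarY μ σ r q y) *
      (del μ σ r q y * psiP μ σ r y - delP μ σ r q y * psiF μ σ r y) +
    del μ σ r q y * etaP μ σ r y (bstarY μ σ r q y) -
      delP μ σ r q y * etaF μ σ r y (bstarY μ σ r q y)) /
  (psiP μ σ r (bstarY μ σ r q y) *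
    (del μ σ r q y * etaP μ σ r y (bstarY μ σ r q y) -
      delP μ σ r q y * etaF μ σ r y (bstarY μ σ r q y)))

/-- `K₄(y)`. -/
noncomputable def K4 (μ σ r q y : ℝ) : ℝ :=
  (psiF μ σ r y * delP μ σ r q y - psiP μ σ r y * del μ σ r q y) /
  (del μ σ r q y * etaP μ σ r y (bstarY μ σ r q y) -
    delP μ σ r q y * etaF μ σ r y (bstarY μ σ r q y))

/-- The candidate value function `w(·;y)` in the subcritical regime. -/
noncomputable def wfun (μ σ r q y x : ℝ) : ℝ :=
  if x < y then
    K1 μ σ r q y * Real.exp (gam1 μ σ (r+q) * x) + K2 μ σ r q y * Real.exp (gam2 μ σ (r+q) * x)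
  else if x < bstarY μ σ r q y then
    K3 μ σ r q y * Real.exp (gam1 μ σ r * x) + K4 μ σ r q y * Real.exp (gam2 μ σ r * x)
  else
    K3 μ σ r q y * Real.exp (gam1 μ σ r * bstarY μ σ r q y) +
      K4 μ σ r q y * Real.exp (gam2 μ σ r * bstarY μ σ r q y) + x - bstarY μ σ r q y

/-- The function `f` characterising the critical level `y_l`. -/
noncomputable def fF (μ σ r q y : ℝ) : ℝ :=
  (-(gam1 μ σ r / gam2 μ σ r) * delP μ σ r q y + gam1 μ σ r * del μ σ r q y) *
    ((gam2 μ σ r)^2/(gam1 μ σ r)^2 *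
      ((delP μ σ r q y - gam1 μ σ r * del μ σ r q y) /
        (delP μ σ r q y - gam2 μ σ r * del μ σ r q y)))
      ^ (gam1 μ σ r / (gam1 μ σ r - gam2 μ σ r))
  - delP μ σ r q (bstar μ σ (r+q))

noncomputable def e1F (μ σ r q b : ℝ) : ℝ :=
  (phiF μ σ (r+q) b - phiP μ σ (r+q) b * Vfun μ σ (r+q) b) /
  (psiP μ σ (r+q) b * phiF μ σ (r+q) b - psiF μ σ (r+q) b * phiP μ σ (r+q) b)

noncomputable def e2F (μ σ r q b : ℝ) : ℝ :=
  (psiP μ σ (r+q) b * Vfun μ σ (r+q) b - psiF μ σ (r+q) b) /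
  (psiP μ σ (r+q) b * phiF μ σ (r+q) b - psiF μ σ (r+q) b * phiP μ σ (r+q) b)

noncomputable def e3F (μ σ r q b y : ℝ) : ℝ :=
  (e1F μ σ r q b * (phiF μ σ r y * psiP μ σ (r+q) y - phiP μ σ r y * psiF μ σ (r+q) y) +
    e2F μ σ r q b * (phiF μ σ r y * phiP μ σ (r+q) y - phiP μ σ r y * phiF μ σ (r+q) y)) /
  (psiP μ σ r y * phiF μ σ r y - psiF μ σ r y * phiP μ σ r y)

noncomputable def e4F (μ σ r q b y : ℝ) : ℝ :=
  (e1F μ σ r q b * (psiP μ σ r y * psiF μ σ (r+q) y - psiF μ σ r y * psiP μ σ (r+q) y) +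
    e2F μ σ r q b * (psiP μ σ r y * phiF μ σ (r+q) y - psiF μ σ r y * phiP μ σ (r+q) y)) /
  (psiP μ σ r y * phiF μ σ r y - psiF μ σ r y * phiP μ σ r y)

/-- The function `H(b,y)` from the critical regime. -/
noncomputable def Hfun (μ σ r q b y : ℝ) : ℝ :=
  (gam1 μ σ r - gam2 μ σ r) *
    (-gam2 μ σ r / gam1 μ σ r) ^ ((gam1 μ σ r + gam2 μ σ r)/(gam1 μ σ r - gam2 μ σ r)) *
    (e3F μ σ r q b y) ^ (-gam2 μ σ r/(gam1 μ σ r - gam2 μ σ r)) *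
    (-e4F μ σ r q b y) ^ (gam1 μ σ r/(gam1 μ σ r - gam2 μ σ r))

/-- `Λ(b,y) = −e₄(b,y)/e₃(b,y)`. -/
noncomputable def Lamfun (μ σ r q b y : ℝ) : ℝ := -e4F μ σ r q b y / e3F μ σ r q b y

/-- `L(y)`. -/
noncomputable def Lfun (μ σ r q y : ℝ) : ℝ :=
  (1/(gam1 μ σ r - gam2 μ σ r)) *
    Real.log ((gam2 μ σ r)^2/(gam1 μ σ r)^2 * Lamfun μ σ r q y y) - y

/-! ### Auxiliary machinery for the proof -/

private lemma hda_congr {f : ℝ → ℝ} {v w x : ℝ} (h : HasDerivAt f v x) (hvw : v = w) :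
    HasDerivAt f w x := hvw ▸ h

private lemma Earg_nonneg (μ σ ρ : ℝ) (hσ : 0 < σ) (hρ : 0 ≤ ρ) :
    0 ≤ μ^2/σ^4 + 2*ρ/σ^2 :=
  add_nonneg (by positivity) (div_nonneg (by linarith) (by positivity))

private lemma sqrt_gt (μ σ ρ : ℝ) (hμ : 0 < μ) (hσ : 0 < σ) (hρ : 0 < ρ) :
    μ/σ^2 < Real.sqrt (μ^2/σ^4 + 2*ρ/σ^2) := by
  have hE := Earg_nonneg μ σ ρ hσ hρ.le
  have hσ2 : (0:ℝ) < σ^2 := by positivity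
  set s := Real.sqrt (μ^2/σ^4 + 2*ρ/σ^2) with hsdef
  have hs : s^2 = μ^2/σ^4 + 2*ρ/σ^2 := Real.sq_sqrt hE
  have hnn : 0 ≤ s := Real.sqrt_nonneg _
  have hs' : s^2*σ^4 = μ^2 + 2*ρ*σ^2 := by
    refine mul_right_cancel₀ hσ2.ne' ?_
    field_simp at hs
    linear_combination σ^2 * hs
  rw [div_lt_iff₀ hσ2]
  nlinarith [hs', hnn, mul_pos hρ hσ2, mul_nonneg hnn hσ2.le, sq_nonneg (s*σ^2 - μ), sq_nonneg (s*σ^2 + μ)]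

private lemma gam1_pos (μ σ ρ : ℝ) (hμ : 0 < μ) (hσ : 0 < σ) (hρ : 0 < ρ) :
    0 < gam1 μ σ ρ := by
  have := sqrt_gt μ σ ρ hμ hσ hρ
  unfold gam1; linarith

private lemma gam2_neg (μ σ ρ : ℝ) (hμ : 0 < μ) (hσ : 0 < σ) (hρ : 0 ≤ ρ) :
    gam2 μ σ ρ < 0 := by
  have h1 := Real.sqrt_nonneg (μ^2/σ^4 + 2*ρ/σ^2)
  have h2 : 0 < μ/σ^2 := div_pos hμ (by positivity)
  unfold gam2; linarith

private lemma gam2_mono (μ σ r q : ℝ) (hμ : 0 < μ) (hσ : 0 < σ) (hr : 0 < r) (hq : 0 < q) :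
    gam2 μ σ (r+q) < gam2 μ σ r := by
  have h1 : 0 < 2*q/σ^2 := div_pos (by linarith) (by positivity)
  have heq : 2*(r+q)/σ^2 = 2*r/σ^2 + 2*q/σ^2 := by ring
  have h2 : μ^2/σ^4 + 2*r/σ^2 < μ^2/σ^4 + 2*(r+q)/σ^2 := by rw [heq]; linarith
  have := Real.sqrt_lt_sqrt (Earg_nonneg μ σ r hσ hr.le) h2
  unfold gam2; linarith

private lemma gam_sum (μ σ ρ : ℝ) (hσ : σ ≠ 0) :
    σ^2*(gam1 μ σ ρ + gam2 μ σ ρ) = -(2*μ) := by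
  unfold gam1 gam2; field_simp; ring

private lemma gam_prod (μ σ ρ : ℝ) (hσ : 0 < σ) (hρ : 0 ≤ ρ) :
    σ^2*(gam1 μ σ ρ * gam2 μ σ ρ) = -(2*ρ) := by
  have hσ' : σ ≠ 0 := ne_of_gt hσ
  unfold gam1 gam2
  set s := Real.sqrt (μ^2/σ^4 + 2*ρ/σ^2) with hsdef
  have hs : s^2 = μ^2/σ^4 + 2*ρ/σ^2 := Real.sq_sqrt (Earg_nonneg μ σ ρ hσ hρ)
  have hσ2 : (0:ℝ) < σ^2 := by positivity
  have hs' : s^2*σ^4 = μ^2 + 2*ρ*σ^2 := by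
    refine mul_right_cancel₀ hσ2.ne' ?_
    field_simp at hs
    linear_combination σ^2 * hs
  field_simp
  linear_combination (-1:ℝ) * hs'

private lemma gam1_mul_mu_lt (μ σ r : ℝ) (hμ : 0 < μ) (hσ : 0 < σ) (hr : 0 < r) :
    gam1 μ σ r * μ < r := by
  have hσ2 : (0:ℝ) < σ^2 := by positivity
  have h1 : μ < Real.sqrt (μ^2/σ^4 + 2*r/σ^2) * σ^2 :=
    (div_lt_iff₀ hσ2).mp (sqrt_gt μ σ r hμ hσ hr)
  have hh : σ^2 * gam2 μ σ r = -(σ^2*Real.sqrt (μ^2/σ^4 + 2*r/σ^2)) - μ := by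
    unfold gam2
    set s := Real.sqrt (μ^2/σ^4 + 2*r/σ^2) with hsdef
    field_simp
  have hpa := gam_prod μ σ r hσ hr.le
  have ha1 := gam1_pos μ σ r hμ hσ hr
  have h2 : σ^2 * gam2 μ σ r + 2*μ < 0 := by rw [hh]; nlinarith
  nlinarith [mul_pos ha1 (show 0 < -(σ^2*gam2 μ σ r + 2*μ) by linarith)]

/-- The basic building blocks for the `b`-dependence of `e₃, e₄`. -/
private noncomputable def U1 (G1 G2 c b : ℝ) : ℝ :=
  (1 - G2*(c+b))/((G1-G2)*Real.exp (G1*b))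

private noncomputable def U2 (G1 G2 c b : ℝ) : ℝ :=
  (G1*(c+b) - 1)/((G1-G2)*Real.exp (G2*b))

private noncomputable def SS (G1 G2 c b : ℝ) : ℝ := G1 + G2 - G1*G2*(c+b)

private noncomputable def DU1 (G1 G2 c b : ℝ) : ℝ :=
  -(SS G1 G2 c b)/((G1-G2)*Real.exp (G1*b))

private noncomputable def DU2 (G1 G2 c b : ℝ) : ℝ :=
  (SS G1 G2 c b)/((G1-G2)*Real.exp (G2*b))

private noncomputable def FF (a1 a2 G1 G2 c y b : ℝ) : ℝ :=
  ((G1-a2)*(Real.exp (a2*y)*Real.exp (G1*y)) * U1 G1 G2 c b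
   + (G2-a2)*(Real.exp (a2*y)*Real.exp (G2*y)) * U2 G1 G2 c b)
  / ((a1-a2)*(Real.exp (a1*y)*Real.exp (a2*y)))

private noncomputable def FC (a1 a2 G1 G2 c y b : ℝ) : ℝ :=
  ((a1-G1)*(Real.exp (a1*y)*Real.exp (G1*y)) * U1 G1 G2 c b
   + (a1-G2)*(Real.exp (a1*y)*Real.exp (G2*y)) * U2 G1 G2 c b)
  / ((a1-a2)*(Real.exp (a1*y)*Real.exp (a2*y)))

private noncomputable def DFF (a1 a2 G1 G2 c y b : ℝ) : ℝ :=
  ((G1-a2)*(Real.exp (a2*y)*Real.exp (G1*y)) * DU1 G1 G2 c b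
   + (G2-a2)*(Real.exp (a2*y)*Real.exp (G2*y)) * DU2 G1 G2 c b)
  / ((a1-a2)*(Real.exp (a1*y)*Real.exp (a2*y)))

private noncomputable def DFC (a1 a2 G1 G2 c y b : ℝ) : ℝ :=
  ((a1-G1)*(Real.exp (a1*y)*Real.exp (G1*y)) * DU1 G1 G2 c b
   + (a1-G2)*(Real.exp (a1*y)*Real.exp (G2*y)) * DU2 G1 G2 c b)
  / ((a1-a2)*(Real.exp (a1*y)*Real.exp (a2*y)))

private lemma hasDerivU1 (G1 G2 c b : ℝ) (hGd : G2 < G1) :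
    HasDerivAt (fun t => U1 G1 G2 c t) (DU1 G1 G2 c b) b := by
  have hGd' : G1 - G2 ≠ 0 := (sub_pos.2 hGd).ne'
  have hne : (G1-G2)*Real.exp (G1*b) ≠ 0 :=
    (mul_pos (sub_pos.2 hGd) (Real.exp_pos _)).ne'
  have hnum : HasDerivAt (fun t : ℝ => 1 - G2*(c+t)) (-(G2*1)) b :=
    (((hasDerivAt_id b).const_add c).const_mul G2).const_sub 1
  have hden : HasDerivAt (fun t : ℝ => (G1-G2)*Real.exp (G1*t))
      ((G1-G2)*(Real.exp (G1*b)*(G1*1))) b :=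
    (((hasDerivAt_id b).const_mul G1).exp).const_mul (G1-G2)
  exact hda_congr (hnum.div hden hne)
    (by unfold DU1 SS; field_simp; ring)

private lemma hasDerivU2 (G1 G2 c b : ℝ) (hGd : G2 < G1) :
    HasDerivAt (fun t => U2 G1 G2 c t) (DU2 G1 G2 c b) b := by
  have hGd' : G1 - G2 ≠ 0 := (sub_pos.2 hGd).ne'
  have hne : (G1-G2)*Real.exp (G2*b) ≠ 0 :=
    (mul_pos (sub_pos.2 hGd) (Real.exp_pos _)).ne'
  have hnum : HasDerivAt (fun t : ℝ => G1*(c+t) - 1) (G1*1) b :=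
    (((hasDerivAt_id b).const_add c).const_mul G1).sub_const 1
  have hden : HasDerivAt (fun t : ℝ => (G1-G2)*Real.exp (G2*t))
      ((G1-G2)*(Real.exp (G2*b)*(G2*1))) b :=
    (((hasDerivAt_id b).const_mul G2).exp).const_mul (G1-G2)
  exact hda_congr (hnum.div hden hne)
    (by unfold DU2 SS; field_simp; ring)

private lemma hasDerivFF (a1 a2 G1 G2 c y b : ℝ) (hGd : G2 < G1) :
    HasDerivAt (fun t => FF a1 a2 G1 G2 c y t) (DFF a1 a2 G1 G2 c y b) b := by
  have h1 := hasDerivU1 G1 G2 c b hGd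
  have h2 := hasDerivU2 G1 G2 c b hGd
  exact hda_congr
    (((h1.const_mul ((G1-a2)*(Real.exp (a2*y)*Real.exp (G1*y)))).add
      (h2.const_mul ((G2-a2)*(Real.exp (a2*y)*Real.exp (G2*y))))).div_const
      ((a1-a2)*(Real.exp (a1*y)*Real.exp (a2*y))))
    (by unfold DFF; ring)

private lemma hasDerivFC (a1 a2 G1 G2 c y b : ℝ) (hGd : G2 < G1) :
    HasDerivAt (fun t => FC a1 a2 G1 G2 c y t) (DFC a1 a2 G1 G2 c y b) b := by
  have h1 := hasDerivU1 G1 G2 c b hGd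
  have h2 := hasDerivU2 G1 G2 c b hGd
  exact hda_congr
    (((h1.const_mul ((a1-G1)*(Real.exp (a1*y)*Real.exp (G1*y)))).add
      (h2.const_mul ((a1-G2)*(Real.exp (a1*y)*Real.exp (G2*y))))).div_const
      ((a1-a2)*(Real.exp (a1*y)*Real.exp (a2*y))))
    (by unfold DFC; ring)

private lemma e1F_eq (μ σ r q G1 G2 c b : ℝ)
    (h3 : G1 = gam1 μ σ (r+q)) (h4 : G2 = gam2 μ σ (r+q))
    (hV : Vfun μ σ (r+q) b = c + b) (hGd : G2 < G1) :
    e1F μ σ r q b = U1 G1 G2 c b := by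
  have hGd' : G1 - G2 ≠ 0 := (sub_pos.2 hGd).ne'
  subst h3 h4
  have hD : psiP μ σ (r+q) b * phiF μ σ (r+q) b - psiF μ σ (r+q) b * phiP μ σ (r+q) b
      = (gam1 μ σ (r+q) - gam2 μ σ (r+q)) *
        (Real.exp (gam1 μ σ (r+q)*b) * Real.exp (gam2 μ σ (r+q)*b)) := by
    simp only [psiF, phiF, psiP, phiP]; ring
  unfold e1F U1
  rw [hD, hV]
  unfold phiF phiP
  field_simp

private lemma e2F_eq (μ σ r q G1 G2 c b : ℝ)
    (h3 : G1 = gam1 μ σ (r+q)) (h4 : G2 = gam2 μ σ (r+q))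
    (hV : Vfun μ σ (r+q) b = c + b) (hGd : G2 < G1) :
    e2F μ σ r q b = U2 G1 G2 c b := by
  have hGd' : G1 - G2 ≠ 0 := (sub_pos.2 hGd).ne'
  subst h3 h4
  have hD : psiP μ σ (r+q) b * phiF μ σ (r+q) b - psiF μ σ (r+q) b * phiP μ σ (r+q) b
      = (gam1 μ σ (r+q) - gam2 μ σ (r+q)) *
        (Real.exp (gam1 μ σ (r+q)*b) * Real.exp (gam2 μ σ (r+q)*b)) := by
    simp only [psiF, phiF, psiP, phiP]; ring
  unfold e2F U2
  rw [hD, hV]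
  unfold psiF psiP
  field_simp

private lemma e3F_eq (μ σ r q a1 a2 G1 G2 c b y : ℝ)
    (h1 : a1 = gam1 μ σ r) (h2 : a2 = gam2 μ σ r)
    (h3 : G1 = gam1 μ σ (r+q)) (h4 : G2 = gam2 μ σ (r+q))
    (hV : Vfun μ σ (r+q) b = c + b) (hGd : G2 < G1) :
    e3F μ σ r q b y = FF a1 a2 G1 G2 c y b := by
  have hU1 := e1F_eq μ σ r q G1 G2 c b h3 h4 hV hGd
  have hU2 := e2F_eq μ σ r q G1 G2 c b h3 h4 hV hGd
  subst h1 h2 h3 h4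
  have hA : phiF μ σ r y * psiP μ σ (r+q) y - phiP μ σ r y * psiF μ σ (r+q) y
      = (gam1 μ σ (r+q) - gam2 μ σ r) *
        (Real.exp (gam2 μ σ r*y)*Real.exp (gam1 μ σ (r+q)*y)) := by
    simp only [psiF, phiF, psiP, phiP]; ring
  have hB : phiF μ σ r y * phiP μ σ (r+q) y - phiP μ σ r y * phiF μ σ (r+q) y
      = (gam2 μ σ (r+q) - gam2 μ σ r) *
        (Real.exp (gam2 μ σ r*y)*Real.exp (gam2 μ σ (r+q)*y)) := by
    simp only [psiF, phiF, psiP, phiP]; ring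
  have hW : psiP μ σ r y * phiF μ σ r y - psiF μ σ r y * phiP μ σ r y
      = (gam1 μ σ r - gam2 μ σ r) *
        (Real.exp (gam1 μ σ r*y)*Real.exp (gam2 μ σ r*y)) := by
    simp only [psiF, phiF, psiP, phiP]; ring
  unfold e3F FF
  rw [hU1, hU2, hA, hB, hW]
  ring

private lemma e4F_eq (μ σ r q a1 a2 G1 G2 c b y : ℝ)
    (h1 : a1 = gam1 μ σ r) (h2 : a2 = gam2 μ σ r)
    (h3 : G1 = gam1 μ σ (r+q)) (h4 : G2 = gam2 μ σ (r+q))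
    (hV : Vfun μ σ (r+q) b = c + b) (hGd : G2 < G1) :
    e4F μ σ r q b y = FC a1 a2 G1 G2 c y b := by
  have hU1 := e1F_eq μ σ r q G1 G2 c b h3 h4 hV hGd
  have hU2 := e2F_eq μ σ r q G1 G2 c b h3 h4 hV hGd
  subst h1 h2 h3 h4
  have hC : psiP μ σ r y * psiF μ σ (r+q) y - psiF μ σ r y * psiP μ σ (r+q) y
      = (gam1 μ σ r - gam1 μ σ (r+q)) *
        (Real.exp (gam1 μ σ r*y)*Real.exp (gam1 μ σ (r+q)*y)) := by
    simp only [psiF, phiF, psiP, phiP]; ring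
  have hDq : psiP μ σ r y * phiF μ σ (r+q) y - psiF μ σ r y * phiP μ σ (r+q) y
      = (gam1 μ σ r - gam2 μ σ (r+q)) *
        (Real.exp (gam1 μ σ r*y)*Real.exp (gam2 μ σ (r+q)*y)) := by
    simp only [psiF, phiF, psiP, phiP]; ring
  have hW : psiP μ σ r y * phiF μ σ r y - psiF μ σ r y * phiP μ σ r y
      = (gam1 μ σ r - gam2 μ σ r) *
        (Real.exp (gam1 μ σ r*y)*Real.exp (gam2 μ σ r*y)) := by
    simp only [psiF, phiF, psiP, phiP]; ring
  unfold e4F FC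
  rw [hU1, hU2, hC, hDq, hW]
  ring

private lemma FF_yy (a1 a2 G1 G2 c y : ℝ) (hGd : G2 < G1) (had : a2 < a1) :
    FF a1 a2 G1 G2 c y y = (1 - a2*(c+y))/((a1-a2)*Real.exp (a1*y)) := by
  have h5 : G1 - G2 ≠ 0 := (sub_pos.2 hGd).ne'
  have h6 : a1 - a2 ≠ 0 := (sub_pos.2 had).ne'
  unfold FF U1 U2
  field_simp
  ring

private lemma FC_yy (a1 a2 G1 G2 c y : ℝ) (hGd : G2 < G1) (had : a2 < a1) :
    FC a1 a2 G1 G2 c y y = (a1*(c+y) - 1)/((a1-a2)*Real.exp (a2*y)) := by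
  have h5 : G1 - G2 ≠ 0 := (sub_pos.2 hGd).ne'
  have h6 : a1 - a2 ≠ 0 := (sub_pos.2 had).ne'
  unfold FC U1 U2
  field_simp
  ring

private lemma key_pos (a1 a2 G1 G2 c y b : ℝ) (had : a2 < a1) (hGd : G2 < G1)
    (hS : 0 < SS G1 G2 c b) (hcb : 0 < c + b) :
    0 < DFC a1 a2 G1 G2 c y b * FF a1 a2 G1 G2 c y b
        - FC a1 a2 G1 G2 c y b * DFF a1 a2 G1 G2 c y b := by
  have h5 : G1 - G2 ≠ 0 := (sub_pos.2 hGd).ne'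
  have h6 : a1 - a2 ≠ 0 := (sub_pos.2 had).ne'
  have hid : DFC a1 a2 G1 G2 c y b * FF a1 a2 G1 G2 c y b
      - FC a1 a2 G1 G2 c y b * DFF a1 a2 G1 G2 c y b
      = Real.exp (G1*y)*Real.exp (G2*y) * (SS G1 G2 c b * (c+b))
        / ((a1-a2) * (Real.exp (G1*b)*Real.exp (G2*b)) * (Real.exp (a1*y)*Real.exp (a2*y))) := by
    unfold DFC FF FC DFF DU1 DU2 U1 U2
    field_simp
    ring
  rw [hid]
  apply div_pos
  · exact mul_pos (mul_pos (Real.exp_pos _) (Real.exp_pos _)) (mul_pos hS hcb)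
  · exact mul_pos (mul_pos (sub_pos.2 had) (mul_pos (Real.exp_pos _) (Real.exp_pos _)))
      (mul_pos (Real.exp_pos _) (Real.exp_pos _))

set_option maxHeartbeats 2000000 in
/-- with `Λ(b,y) = −e₄(b,y)/e₃(b,y)` and
`L(y) = (1/(γ₁−γ₂))log((γ₂²/γ₁²)Λ(y,y)) − y`:
(i) `b ↦ Λ(b,y)` is strictly decreasing on `(b*_{r+q}, y)` for `y ∈ [y_l,y_u]`;
(ii) so is `b ↦ e₃(b,y)`; (iii) `L` is strictly decreasing on `(y_l,y_u)`;
(iv) `L(y_u) = 0`. -/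
theorem stmt19 (μ σ r q : ℝ) (hμ : 0 < μ) (hσ : 0 < σ) (hr : 0 < r) (hq : 0 < q)
    (yl : ℝ) (hyl : yl ∈ Set.Ioo 0 (yUpper μ σ r q)) (hylf : fF μ σ r q yl = 0)
    (hyluniq : ∀ y ∈ Set.Ioo 0 (yUpper μ σ r q), fF μ σ r q y = 0 → y = yl)
    (hylb : yl ∈ Set.Ioo (bstar μ σ (r+q)) (yUpper μ σ r q)) :
    (∀ y ∈ Set.Icc yl (yUpper μ σ r q),
      StrictAntiOn (fun b => Lamfun μ σ r q b y) (Set.Ioo (bstar μ σ (r+q)) y)) ∧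
    (∀ y ∈ Set.Icc yl (yUpper μ σ r q),
      StrictAntiOn (fun b => e3F μ σ r q b y) (Set.Ioo (bstar μ σ (r+q)) y)) ∧
    StrictAntiOn (Lfun μ σ r q) (Set.Ioo yl (yUpper μ σ r q)) ∧
    Lfun μ σ r q (yUpper μ σ r q) = 0 := by
  have hσ2 : (0:ℝ) < σ^2 := by positivity
  have hrq : (0:ℝ) < r + q := by linarith
  set a1 := gam1 μ σ r with ha1def
  set a2 := gam2 μ σ r with ha2def
  set G1 := gam1 μ σ (r+q) with hG1def
  set G2 := gam2 μ σ (r+q) with hG2def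
  set B := bstar μ σ (r+q) with hBdef
  set c := μ/(r+q) - B with hcdef
  clear_value a1 a2 G1 G2 B c
  have ha1 : 0 < a1 := by rw [ha1def]; exact gam1_pos μ σ r hμ hσ hr
  have ha2 : a2 < 0 := by rw [ha2def]; exact gam2_neg μ σ r hμ hσ hr.le
  have hG1 : 0 < G1 := by rw [hG1def]; exact gam1_pos μ σ (r+q) hμ hσ hrq
  have hG2 : G2 < 0 := by rw [hG2def]; exact gam2_neg μ σ (r+q) hμ hσ hrq.le
  have hG2a2 : G2 < a2 := by rw [hG2def, ha2def]; exact gam2_mono μ σ r q hμ hσ hr hq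
  have hadlt : a2 < a1 := lt_trans ha2 ha1
  have hGdlt : G2 < G1 := lt_trans hG2 hG1
  have hsumG : σ^2*(G1 + G2) = -(2*μ) := by rw [hG1def, hG2def]; exact gam_sum μ σ (r+q) hσ.ne'
  have hprodG : σ^2*(G1 * G2) = -(2*(r+q)) := by rw [hG1def, hG2def]; exact gam_prod μ σ (r+q) hσ hrq.le
  have hsa : σ^2*(a1 + a2) = -(2*μ) := by rw [ha1def, ha2def]; exact gam_sum μ σ r hσ.ne'
  have hpa : σ^2*(a1 * a2) = -(2*r) := by rw [ha1def, ha2def]; exact gam_prod μ σ r hσ hr.le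
  have hμr : a1 * μ < r := by rw [ha1def]; exact gam1_mul_mu_lt μ σ r hμ hσ hr
  -- the exponential identity at b*
  have hG1sq : (0:ℝ) < G1^2 := by positivity
  have hG2sq : (0:ℝ) < G2^2 := by rw [pow_two]; exact mul_pos_of_neg_of_neg hG2 hG2
  have ha2sq : (0:ℝ) < a2^2 := by rw [pow_two]; exact mul_pos_of_neg_of_neg ha2 ha2
  have ha1sq : (0:ℝ) < a1^2 := by positivity
  have hBexp : Real.exp ((G1-G2)*B) = G2^2/G1^2 := by
    rw [hBdef]
    show Real.exp ((G1-G2) * bstar μ σ (r+q)) = G2^2/G1^2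
    simp only [bstar]
    rw [← hG1def, ← hG2def]
    rw [mul_comm, div_mul_cancel₀ _ (sub_pos.2 hGdlt).ne']
    exact Real.exp_log (div_pos hG2sq hG1sq)
  have hkey : G1^2 * Real.exp (G1*B) = G2^2 * Real.exp (G2*B) := by
    have h : Real.exp (G1*B) = Real.exp ((G1-G2)*B) * Real.exp (G2*B) := by
      rw [← Real.exp_add]; congr 1; ring
    rw [h, hBexp]
    field_simp
  have hδ' : 0 < G1*Real.exp (G1*B) - G2*Real.exp (G2*B) := by
    linarith [mul_pos hG1 (Real.exp_pos (G1*B)), mul_neg_of_neg_of_pos hG2 (Real.exp_pos (G2*B))]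
  have hfrac : (Real.exp (G1*B) - Real.exp (G2*B))/(G1*Real.exp (G1*B) - G2*Real.exp (G2*B))
      = μ/(r+q) := by
    rw [div_eq_div_iff hδ'.ne' hrq.ne']
    linear_combination ((Real.exp (G1*B) - Real.exp (G2*B))/2)*hprodG
      + (-(G1*Real.exp (G1*B) - G2*Real.exp (G2*B))/2)*hsumG + (σ^2/2)*hkey
  have hVfun : ∀ b, B ≤ b → Vfun μ σ (r+q) b = c + b := by
    intro b hb
    simp only [Vfun]
    rw [← hG1def, ← hG2def, ← hBdef]
    rw [if_neg (not_lt.2 hb)]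
    rw [hfrac, hcdef]
    ring
  have hcB : (r+q)*(c+B) = μ := by
    rw [hcdef]; field_simp; ring
  have hGsum2 : G1 + G2 = G1*G2*(c+B) := by
    have h2 : σ^2*((r+q)*(G1+G2)) = σ^2*((r+q)*(G1*G2*(c+B))) := by
      linear_combination (r+q)*hsumG - ((c+B)*(r+q))*hprodG + (2*(r+q))*hcB
    exact mul_left_cancel₀ hrq.ne' (mul_left_cancel₀ hσ2.ne' h2)
  have hGG : G1*G2 < 0 := mul_neg_of_pos_of_neg hG1 hG2
  have hSpos : ∀ b, B < b → 0 < SS G1 G2 c b := by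
    intro b hb
    unfold SS
    rw [hGsum2]
    linarith [mul_pos_of_neg_of_neg hGG (show B - b < 0 by linarith)]
  have hcpos : ∀ b, B < b → 0 < c + b := by
    intro b hb
    have h1 : 0 < μ/(r+q) := div_pos hμ hrq
    rw [hcdef]; linarith
  have hByu : B < yUpper μ σ r q := by
    have h1 : μ/(r+q) < μ/r := by
      rw [div_lt_div_iff₀ hrq hr]; linarith [mul_pos hμ hq]
    simp only [yUpper]
    rw [← hBdef]; linarith
  have hcyu : c + yUpper μ σ r q = μ/r := by
    simp only [yUpper]
    rw [← hBdef, hcdef]; ring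
  have hBo : B < yl := hylb.1
  -- main statement for parts (i) and (ii)
  have main12 : ∀ y ∈ Set.Icc yl (yUpper μ σ r q),
      StrictAntiOn (fun b => Lamfun μ σ r q b y) (Set.Ioo B y) ∧
      StrictAntiOn (fun b => e3F μ σ r q b y) (Set.Ioo B y) := by
    intro y hy
    have hBy : B < y := lt_of_lt_of_le hBo hy.1
    have hcy : 0 < c + y := hcpos y hBy
    have hFF : ∀ b, HasDerivAt (fun t => FF a1 a2 G1 G2 c y t) (DFF a1 a2 G1 G2 c y b) b :=
      fun b => hasDerivFF a1 a2 G1 G2 c y b hGdlt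
    have hFC : ∀ b, HasDerivAt (fun t => FC a1 a2 G1 G2 c y t) (DFC a1 a2 G1 G2 c y b) b :=
      fun b => hasDerivFC a1 a2 G1 G2 c y b hGdlt
    have hDFFneg : ∀ b ∈ Set.Ioo B y, DFF a1 a2 G1 G2 c y b < 0 := by
      intro b hb
      have hSb := hSpos b hb.1
      have h1 : DU1 G1 G2 c b < 0 := by
        unfold DU1
        exact div_neg_of_neg_of_pos (by linarith)
          (mul_pos (sub_pos.2 hGdlt) (Real.exp_pos _))
      have h2 : 0 < DU2 G1 G2 c b := by
        unfold DU2
        exact div_pos hSb (mul_pos (sub_pos.2 hGdlt) (Real.exp_pos _))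
      have hAy : 0 < (G1-a2)*(Real.exp (a2*y)*Real.exp (G1*y)) :=
        mul_pos (by linarith) (mul_pos (Real.exp_pos _) (Real.exp_pos _))
      have hBy' : (G2-a2)*(Real.exp (a2*y)*Real.exp (G2*y)) < 0 :=
        mul_neg_of_neg_of_pos (by linarith) (mul_pos (Real.exp_pos _) (Real.exp_pos _))
      have hWy : 0 < (a1-a2)*(Real.exp (a1*y)*Real.exp (a2*y)) :=
        mul_pos (sub_pos.2 hadlt) (mul_pos (Real.exp_pos _) (Real.exp_pos _))
      unfold DFF
      exact div_neg_of_neg_of_pos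
        (by linarith [mul_neg_of_pos_of_neg hAy h1, mul_neg_of_neg_of_pos hBy' h2]) hWy
    have hFFanti : StrictAntiOn (fun t => FF a1 a2 G1 G2 c y t) (Set.Ioc B y) := by
      apply strictAntiOn_of_deriv_neg (convex_Ioc B y)
      · exact fun x _ => (hFF x).differentiableAt.continuousAt.continuousWithinAt
      · intro x hx
        rw [interior_Ioc] at hx
        rw [(hFF x).deriv]
        exact hDFFneg x hx
    have he3eq : ∀ b, B ≤ b → e3F μ σ r q b y = FF a1 a2 G1 G2 c y b :=
      fun b hb => e3F_eq μ σ r q a1 a2 G1 G2 c b y ha1def ha2def hG1def hG2def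
        (hVfun b hb) hGdlt
    have he4eq : ∀ b, B ≤ b → e4F μ σ r q b y = FC a1 a2 G1 G2 c y b :=
      fun b hb => e4F_eq μ σ r q a1 a2 G1 G2 c b y ha1def ha2def hG1def hG2def
        (hVfun b hb) hGdlt
    have hFFy : 0 < FF a1 a2 G1 G2 c y y := by
      rw [FF_yy a1 a2 G1 G2 c y hGdlt hadlt]
      apply div_pos
      · linarith [mul_neg_of_neg_of_pos ha2 hcy]
      · exact mul_pos (sub_pos.2 hadlt) (Real.exp_pos _)
    have hFFpos : ∀ b ∈ Set.Ioo B y, 0 < FF a1 a2 G1 G2 c y b := by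
      intro b hb
      exact lt_trans hFFy (hFFanti ⟨hb.1, hb.2.le⟩ ⟨hBy, le_refl y⟩ hb.2)
    constructor
    · -- part (i): Λ strictly decreasing in b
      have hG : StrictAntiOn
          (fun t => -FC a1 a2 G1 G2 c y t / FF a1 a2 G1 G2 c y t) (Set.Ioo B y) := by
        apply strictAntiOn_of_deriv_neg (convex_Ioo B y)
        · intro x hx
          exact ((hFC x).neg.div (hFF x) (hFFpos x hx).ne').differentiableAt.continuousAt.continuousWithinAt
        · intro x hx
          rw [interior_Ioo] at hx
          have H := (hFC x).neg.div (hFF x) (hFFpos x hx).ne'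
          rw [show (fun t => -FC a1 a2 G1 G2 c y t / FF a1 a2 G1 G2 c y t) = ((-fun t => FC a1 a2 G1 G2 c y t) / fun t => FF a1 a2 G1 G2 c y t) from rfl, H.deriv, Pi.neg_apply]
          have hk := key_pos a1 a2 G1 G2 c y x hadlt hGdlt (hSpos x hx.1) (hcpos x hx.1)
          exact div_neg_of_neg_of_pos (by linarith [hk]) (pow_pos (hFFpos x hx) 2)
      intro b1 h1 b2 h2 h12
      have e1 : Lamfun μ σ r q b1 y = -FC a1 a2 G1 G2 c y b1 / FF a1 a2 G1 G2 c y b1 := by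
        simp only [Lamfun]
        rw [he3eq b1 h1.1.le, he4eq b1 h1.1.le]
      have e2 : Lamfun μ σ r q b2 y = -FC a1 a2 G1 G2 c y b2 / FF a1 a2 G1 G2 c y b2 := by
        simp only [Lamfun]
        rw [he3eq b2 h2.1.le, he4eq b2 h2.1.le]
      show Lamfun μ σ r q b2 y < Lamfun μ σ r q b1 y
      rw [e1, e2]
      exact hG h1 h2 h12
    · -- part (ii): e₃ strictly decreasing in b
      intro b1 h1 b2 h2 h12
      show e3F μ σ r q b2 y < e3F μ σ r q b1 y
      rw [he3eq b1 h1.1.le, he3eq b2 h2.1.le]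
      exact hFFanti ⟨h1.1, h1.2.le⟩ ⟨h2.1, h2.2.le⟩ h12
  -- the closed form of L
  have hLval : ∀ y, B < y → y ≤ yUpper μ σ r q →
      Lfun μ σ r q y = (1/(a1-a2)) *
        Real.log ((a2^2*(1-a1*(c+y)))/(a1^2*(1-a2*(c+y)))) := by
    intro y hBy hyu
    have hcy : 0 < c + y := hcpos y hBy
    have hcyr : c + y ≤ μ/r := by
      have := hcyu; linarith
    have h1a : 0 < 1 - a1*(c+y) := by
      have h2 : a1*(c+y) ≤ a1*(μ/r) := mul_le_mul_of_nonneg_left hcyr ha1.le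
      have h3 : a1*(μ/r) < 1 := by
        have h4 := (div_lt_one hr).2 hμr
        rwa [mul_div_assoc] at h4
      linarith
    have h2a : 0 < 1 - a2*(c+y) := by linarith [mul_neg_of_neg_of_pos ha2 hcy]
    have hLam : Lamfun μ σ r q y y
        = Real.exp ((a1-a2)*y) * ((1-a1*(c+y))/(1-a2*(c+y))) := by
      simp only [Lamfun]
      rw [e3F_eq μ σ r q a1 a2 G1 G2 c y y ha1def ha2def hG1def hG2def (hVfun y hBy.le) hGdlt]
      rw [e4F_eq μ σ r q a1 a2 G1 G2 c y y ha1def ha2def hG1def hG2def (hVfun y hBy.le) hGdlt]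
      rw [FF_yy a1 a2 G1 G2 c y hGdlt hadlt, FC_yy a1 a2 G1 G2 c y hGdlt hadlt]
      rw [show (a1-a2)*y = a1*y - a2*y by ring, Real.exp_sub]
      have h5 : a1 - a2 ≠ 0 := (sub_pos.2 hadlt).ne'
      field_simp
      ring
    simp only [Lfun]
    rw [← ha1def, ← ha2def, hLam]
    have hRpos : 0 < (a2^2*(1-a1*(c+y)))/(a1^2*(1-a2*(c+y))) := by
      apply div_pos
      · exact mul_pos ha2sq h1a
      · exact mul_pos ha1sq h2a
    have harg : a2^2/a1^2 * (Real.exp ((a1-a2)*y) * ((1-a1*(c+y))/(1-a2*(c+y))))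
        = ((a2^2*(1-a1*(c+y)))/(a1^2*(1-a2*(c+y)))) * Real.exp ((a1-a2)*y) := by
      field_simp
    rw [harg, Real.log_mul hRpos.ne' (Real.exp_ne_zero _), Real.log_exp]
    have h5 : a1 - a2 ≠ 0 := (sub_pos.2 hadlt).ne'
    field_simp
    ring
  refine ⟨fun y hy => (main12 y hy).1, fun y hy => (main12 y hy).2, ?_, ?_⟩
  · -- part (iii): L strictly decreasing
    intro y1 h1 y2 h2 h12
    have hB1 : B < y1 := lt_trans hBo h1.1
    have hB2 : B < y2 := lt_trans hBo h2.1
    rw [hLval y1 hB1 h1.2.le, hLval y2 hB2 h2.2.le]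
    have hc1 : 0 < c + y1 := hcpos y1 hB1
    have hc2 : 0 < c + y2 := hcpos y2 hB2
    have hc2r : c + y2 < μ/r := by
      have := hcyu; linarith [h2.2]
    have hc1r : c + y1 < μ/r := by linarith
    have h3 : a1*(μ/r) < 1 := by
      have h4 := (div_lt_one hr).2 hμr
      rwa [mul_div_assoc] at h4
    have h1a : 0 < 1 - a1*(c+y1) := by
      linarith [mul_lt_mul_of_pos_left hc1r ha1]
    have h2a : 0 < 1 - a1*(c+y2) := by
      linarith [mul_lt_mul_of_pos_left hc2r ha1]
    have h1b : 0 < 1 - a2*(c+y1) := by linarith [mul_neg_of_neg_of_pos ha2 hc1]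
    have h2b : 0 < 1 - a2*(c+y2) := by linarith [mul_neg_of_neg_of_pos ha2 hc2]
    apply mul_lt_mul_of_pos_left _ (one_div_pos.2 (sub_pos.2 hadlt))
    apply Real.log_lt_log (div_pos (mul_pos ha2sq h2a) (mul_pos ha1sq h2b))
    rw [div_lt_div_iff₀ (mul_pos ha1sq h2b) (mul_pos ha1sq h1b)]
    linarith [mul_pos (mul_pos (mul_pos ha1sq ha2sq) (sub_pos.2 hadlt))
      (sub_pos.2 h12)]
  · -- part (iv): L(y_u) = 0
    rw [hLval (yUpper μ σ r q) hByu (le_refl _), hcyu]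
    have hra : r*(a1+a2) = μ*(a1*a2) := by
      linear_combination (-(a1*a2)/2)*hsa + ((a1+a2)/2)*hpa
    have hone : a2^2*(1-a1*(μ/r)) = a1^2*(1-a2*(μ/r)) := by
      field_simp
      linear_combination (a2-a1)*hra
    have h2a : 0 < 1 - a2*(μ/r) := by
      linarith [mul_neg_of_neg_of_pos ha2 (div_pos hμ hr)]
    rw [hone, div_self (mul_pos ha1sq h2a).ne', Real.log_one, mul_zero]
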